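/- For every α ∈ ℝ and for all sufficiently large t > 0 there exist integers p and q with 1 ≤ q < t·√(2/√3) such that (αq − p)²·t² + q²/t² < 2/√3; equivalently, the inequality ⟨αq⟩ < (1/t)·√(2/√3 − (q/t)²) is solvable in positive integers q for all large t. -/

import Mathlib

noncomputable def Fv (α t : ℝ) (q p : ℤ) : ℝ := (α * q - p)^2 * t^2 + (q:ℝ)^2 / t^2
noncomputable def ipv (α t : ℝ) (q p q' p' : ℤ) : ℝ :=
  (α*q - p)*(α*q' - p')*t^2 + (q:ℝ)*(q':ℝ)/t^2

lemma lagrange_id (α t : ℝ) (ht : t ≠ 0) (a b c d : ℤ) :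
    Fv α t a b * Fv α t c d - (ipv α t a b c d)^2 = ((a*d - c*b : ℤ):ℝ)^2 := by
  simp only [Fv, ipv]; push_cast; field_simp; ring

lemma expand_id (α t : ℝ) (ht : t ≠ 0) (x y a b c d : ℤ) :
    Fv α t (x*a + y*c) (x*b + y*d) =
      (x:ℝ)^2 * Fv α t a b + 2*(x:ℝ)*(y:ℝ)*ipv α t a b c d + (y:ℝ)^2 * Fv α t c d := by
  simp only [Fv, ipv]; push_cast; field_simp; ring

lemma ip_sub_id (α t : ℝ) (ht : t ≠ 0) (a b c d k : ℤ) :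
    ipv α t a b (c - k*a) (d - k*b) = ipv α t a b c d - (k:ℝ) * Fv α t a b := by
  simp only [Fv, ipv]; push_cast; field_simp; ring

lemma homog_id (α t : ℝ) (ht : t ≠ 0) (g a b : ℤ) :
    Fv α t (g*a) (g*b) = (g:ℝ)^2 * Fv α t a b := by
  simp only [Fv]; push_cast; field_simp

lemma neg_id (α t : ℝ) (a b : ℤ) : Fv α t (-a) (-b) = Fv α t a b := by
  simp only [Fv]; push_cast; ring

-- minimum existence
lemma min_exists (α t : ℝ) (ht : 2 ≤ t) :
    ∃ q₀ p₀ : ℤ, (q₀, p₀) ≠ (0,0) ∧ ∀ q p : ℤ, (q,p) ≠ (0,0) → Fv α t q₀ p₀ ≤ Fv α t q p := by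
  have ht0 : (0:ℝ) < t := by linarith
  have htne : t ≠ 0 := ne_of_gt ht0
  set N : ℤ := ⌈t^2⌉ with hN
  set M : ℤ := ⌈|α| * t^2 + 1⌉ with hM
  set S : Finset (ℤ×ℤ) :=
    ((Finset.Icc (-N) N) ×ˢ (Finset.Icc (-M) M)).filter (fun x => x ≠ (0,0)) with hS
  have hmemS : ∀ q p : ℤ, (q,p) ≠ (0,0) → Fv α t q p ≤ t^2 → (q,p) ∈ S := by
    intro q p hne hle
    have h1 : (q:ℝ)^2 / t^2 ≤ t^2 := by
      have : (0:ℝ) ≤ (α * q - p)^2 * t^2 := by positivity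
      simp only [Fv] at hle; linarith
    have hq2 : (q:ℝ)^2 ≤ (t^2)^2 := by
      rw [div_le_iff₀ (by positivity)] at h1; nlinarith
    have hqabs : |(q:ℝ)| ≤ t^2 := by
      rw [abs_le]; constructor <;> nlinarith
    have h2 : (α * q - p)^2 * t^2 ≤ t^2 := by
      have : (0:ℝ) ≤ (q:ℝ)^2 / t^2 := by positivity
      simp only [Fv] at hle; linarith
    have herr : |α * q - p| ≤ 1 := by
      have ht2 : (0:ℝ) < t^2 := by positivity
      have he2 : (α * q - p)^2 ≤ 1 := by nlinarith
      rw [abs_le]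
      constructor
      · nlinarith [sq_nonneg (α * (q:ℝ) - p + 1)]
      · nlinarith [sq_nonneg (α * (q:ℝ) - p - 1)]
    have hpabs : |(p:ℝ)| ≤ |α| * t^2 + 1 := by
      have : (p:ℝ) = α * q - (α * q - p) := by ring
      rw [this]
      calc |α * (q:ℝ) - (α * q - p)| ≤ |α * (q:ℝ)| + |α * q - p| := abs_sub _ _
        _ ≤ |α| * t^2 + 1 := by
            rw [abs_mul]
            have := abs_nonneg α
            nlinarith
    have hqN : q ∈ Finset.Icc (-N) N := by
      rw [Finset.mem_Icc]
      have h3 : (q:ℝ) ≤ (N:ℝ) := le_trans (le_abs_self _) (hqabs.trans (Int.le_ceil _))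
      have h4 : -(N:ℝ) ≤ (q:ℝ) := by
        have := neg_abs_le (q:ℝ); have := Int.le_ceil (t^2); linarith
      exact ⟨by exact_mod_cast h4, by exact_mod_cast h3⟩
    have hpM : p ∈ Finset.Icc (-M) M := by
      rw [Finset.mem_Icc]
      have h3 : (p:ℝ) ≤ (M:ℝ) := le_trans (le_abs_self _) (hpabs.trans (Int.le_ceil _))
      have h4 : -(M:ℝ) ≤ (p:ℝ) := by
        have := neg_abs_le (p:ℝ); have := Int.le_ceil (|α| * t^2 + 1); linarith
      exact ⟨by exact_mod_cast h4, by exact_mod_cast h3⟩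
    rw [hS, Finset.mem_filter, Finset.mem_product]
    exact ⟨⟨hqN, hpM⟩, hne⟩
  have hF01 : Fv α t 0 1 = t^2 := by simp [Fv]
  have h01 : ((0:ℤ),(1:ℤ)) ∈ S := hmemS 0 1 (by simp) (by rw [hF01])
  obtain ⟨⟨q₀, p₀⟩, hmem, hmin⟩ := S.exists_min_image (fun x => Fv α t x.1 x.2) ⟨_, h01⟩
  refine ⟨q₀, p₀, ?_, ?_⟩
  · rw [hS, Finset.mem_filter] at hmem; exact hmem.2
  · intro q p hne
    by_cases hle : Fv α t q p ≤ t^2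
    · exact hmin (q,p) (hmemS q p hne hle)
    · have := hmin _ h01
      simp only [hF01] at this
      push_neg at hle
      exact le_trans this (le_of_lt hle)

set_option maxHeartbeats 2000000 in
lemma key_irrational (α t : ℝ) (hirr : Irrational α) (ht : 2 ≤ t) :
    ∃ q₀ p₀ : ℤ, (q₀, p₀) ≠ (0,0) ∧ Fv α t q₀ p₀ < 2 / Real.sqrt 3 ∧
      ∀ q p : ℤ, (q,p) ≠ (0,0) → Fv α t q₀ p₀ ≤ Fv α t q p := by
  have ht0 : (0:ℝ) < t := by linarith
  have htne : t ≠ 0 := ne_of_gt ht0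
  obtain ⟨q₀, p₀, hne0, hmin⟩ := min_exists α t ht
  obtain ⟨m, hm⟩ : ∃ m, m = Fv α t q₀ p₀ := ⟨_, rfl⟩
  rw [← hm] at hmin
  suffices hmlt : m < 2 / Real.sqrt 3 by
    exact ⟨q₀, p₀, hne0, hm ▸ hmlt, hm ▸ hmin⟩
  -- m > 0
  have hm0 : 0 < m := by
    rcases eq_or_ne q₀ 0 with hq | hq
    · have hp : p₀ ≠ 0 := by rintro rfl; exact hne0 (by rw [hq])
      have hp2 : (1:ℝ) ≤ (p₀:ℝ)^2 := by
        have h1 : (1:ℤ) ≤ p₀^2 := by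
          rcases lt_or_gt_of_ne hp with h | h <;> nlinarith
        exact_mod_cast h1
      rw [hm, hq]; simp only [Fv, Int.cast_zero]
      have h3 : (α * 0 - p₀)^2 = (p₀:ℝ)^2 := by ring
      rw [h3]
      have ht2 : (4:ℝ) ≤ t^2 := by nlinarith
      have h4 : (0:ℝ)^2 / t^2 = 0 := by simp
      rw [h4]; nlinarith
    · have hq2 : (1:ℝ) ≤ (q₀:ℝ)^2 := by
        have h1 : (1:ℤ) ≤ q₀^2 := by
          rcases lt_or_gt_of_ne hq with h | h <;> nlinarith
        exact_mod_cast h1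
      rw [hm]; simp only [Fv]
      have h2 : (0:ℝ) < (q₀:ℝ)^2 / t^2 := by positivity
      nlinarith [mul_nonneg (sq_nonneg (α * (q₀:ℝ) - p₀)) (sq_nonneg t)]
  -- coprimality
  have hcop : IsCoprime q₀ p₀ := by
    rw [Int.isCoprime_iff_gcd_eq_one]
    by_contra hg
    have hgne : Int.gcd q₀ p₀ ≠ 0 := by
      rw [Ne, Int.gcd_eq_zero_iff]
      rintro ⟨h1, h2⟩; exact hne0 (by rw [h1, h2])
    obtain ⟨g, hgdef⟩ : ∃ g : ℕ, g = Int.gcd q₀ p₀ := ⟨_, rfl⟩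
    have hg2 : 2 ≤ g := by omega
    obtain ⟨q', hq'⟩ : (g : ℤ) ∣ q₀ := hgdef ▸ Int.gcd_dvd_left q₀ p₀
    obtain ⟨p', hp'⟩ : (g : ℤ) ∣ p₀ := hgdef ▸ Int.gcd_dvd_right q₀ p₀
    have hne' : (q', p') ≠ (0,0) := by
      rintro h
      have h1 : q' = 0 := congrArg Prod.fst h
      have h2 : p' = 0 := congrArg Prod.snd h
      apply hne0
      rw [hq', hp', h1, h2]; simp
    have hF : m = ((g : ℤ):ℝ)^2 * Fv α t q' p' := by
      rw [hm, hq', hp']; exact homog_id α t htne _ _ _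
    have hge : m ≤ Fv α t q' p' := hmin q' p' hne'
    have hgR : (4:ℝ) ≤ ((g : ℤ):ℝ)^2 := by
      have h2 : (2:ℝ) ≤ ((g : ℤ):ℝ) := by exact_mod_cast hg2
      nlinarith
    have hF'pos : 0 < Fv α t q' p' := lt_of_lt_of_le hm0 hge
    nlinarith
  -- Bezout
  obtain ⟨u, v, huv⟩ := hcop
  obtain ⟨q₁, hq₁⟩ : ∃ x : ℤ, x = -v := ⟨_, rfl⟩
  obtain ⟨p₁, hp₁⟩ : ∃ x : ℤ, x = u := ⟨_, rfl⟩
  have hdet1 : q₀ * p₁ - q₁ * p₀ = 1 := by rw [hq₁, hp₁]; linarith [huv]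
  obtain ⟨k, hk⟩ : ∃ x : ℤ, x = round (ipv α t q₀ p₀ q₁ p₁ / m) := ⟨_, rfl⟩
  obtain ⟨q₂, hq₂⟩ : ∃ x : ℤ, x = q₁ - k * q₀ := ⟨_, rfl⟩
  obtain ⟨p₂, hp₂⟩ : ∃ x : ℤ, x = p₁ - k * p₀ := ⟨_, rfl⟩
  obtain ⟨c, hc⟩ : ∃ x : ℝ, x = ipv α t q₀ p₀ q₂ p₂ := ⟨_, rfl⟩
  have hcval : c = ipv α t q₀ p₀ q₁ p₁ - (k:ℝ) * m := by
    rw [hc, hq₂, hp₂, ip_sub_id α t htne, ← hm]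
  have hck : |c| ≤ m / 2 := by
    have h1 : |ipv α t q₀ p₀ q₁ p₁ / m - (k:ℝ)| ≤ 1/2 := by
      rw [hk]; push_cast; exact abs_sub_round _
    have h2 : c = m * (ipv α t q₀ p₀ q₁ p₁ / m - (k:ℝ)) := by
      rw [hcval]; field_simp
    rw [h2, abs_mul, abs_of_pos hm0]
    nlinarith [abs_nonneg (ipv α t q₀ p₀ q₁ p₁ / m - (k:ℝ))]
  have hdet2 : q₀ * p₂ - q₂ * p₀ = 1 := by rw [hq₂, hp₂]; linarith [hdet1]
  obtain ⟨W, hW⟩ : ∃ x : ℝ, x = Fv α t q₂ p₂ := ⟨_, rfl⟩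
  have hne2 : (q₂, p₂) ≠ (0,0) := by
    rintro h
    have h1 : q₂ = 0 := congrArg Prod.fst h
    have h2 : p₂ = 0 := congrArg Prod.snd h
    rw [h1, h2] at hdet2; simp at hdet2
  have hWm : m ≤ W := by rw [hW]; exact hmin q₂ p₂ hne2
  have hL : m * W - c^2 = 1 := by
    have h := lagrange_id α t htne q₀ p₀ q₂ p₂
    rw [← hm, ← hW, ← hc] at h
    rw [h, hdet2]; norm_num
  -- Hermite bound with strictness
  have hs3 : Real.sqrt 3 ^ 2 = 3 := Real.sq_sqrt (by norm_num)
  have hs3pos : 0 < Real.sqrt 3 := Real.sqrt_pos.mpr (by norm_num)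
  by_contra hge
  push_neg at hge  -- 2/√3 ≤ m
  have hm43 : 4/3 ≤ m^2 := by
    have h1 : (2 / Real.sqrt 3)^2 = 4/3 := by
      rw [div_pow, hs3]; norm_num
    nlinarith [hge, div_pos (by norm_num : (0:ℝ) < 2) hs3pos]
  have hc2 : c^2 ≤ m^2/4 := by
    have := abs_le.mp hck
    nlinarith
  -- equality chain
  have hmsq : m^2 = 4/3 := by nlinarith
  have hWeq : W = m := by nlinarith
  have hceq : c^2 = m^2/4 := by nlinarith
  have hsign : 2*c = m ∨ 2*c = -m := by
    have h0 : (2*c - m) * (2*c + m) = 0 := by linear_combination 4 * hceq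
    rcases mul_eq_zero.mp h0 with h | h
    · left; linarith
    · right; linarith
  -- every value is m * integer
  have hrep : ∀ q p : ℤ, ∃ n : ℤ, Fv α t q p = m * (n:ℝ) := by
    intro q p
    obtain ⟨x, hx⟩ : ∃ z : ℤ, z = q * p₂ - p * q₂ := ⟨_, rfl⟩
    obtain ⟨y, hy⟩ : ∃ z : ℤ, z = q₀ * p - p₀ * q := ⟨_, rfl⟩
    have hqe : q = x * q₀ + y * q₂ := by rw [hx, hy]; linear_combination -q * hdet2
    have hpe : p = x * p₀ + y * p₂ := by rw [hx, hy]; linear_combination -p * hdet2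
    have hFe : Fv α t q p = (x:ℝ)^2 * m + 2*(x:ℝ)*(y:ℝ)*c + (y:ℝ)^2 * W := by
      conv_lhs => rw [hqe, hpe]
      rw [expand_id α t htne x y q₀ p₀ q₂ p₂, ← hm, ← hc, ← hW]
    rcases hsign with h | h
    · refine ⟨x^2 + x*y + y^2, ?_⟩
      rw [hFe, hWeq]; push_cast; linear_combination ((x:ℝ)*(y:ℝ)) * h
    · refine ⟨x^2 - x*y + y^2, ?_⟩
      rw [hFe, hWeq]; push_cast; linear_combination ((x:ℝ)*(y:ℝ)) * h
  obtain ⟨n₁, hn₁⟩ := hrep 0 1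
  obtain ⟨n₂, hn₂⟩ := hrep 1 0
  obtain ⟨n₃, hn₃⟩ := hrep 1 1
  have hv₁ : Fv α t 0 1 = t^2 := by simp only [Fv]; push_cast; ring
  have hv₂ : Fv α t 1 0 = α^2 * t^2 + 1/t^2 := by simp only [Fv]; push_cast; ring
  have hv₃ : Fv α t 1 1 = (α - 1)^2 * t^2 + 1/t^2 := by simp only [Fv]; push_cast; ring
  rw [hv₁] at hn₁; rw [hv₂] at hn₂; rw [hv₃] at hn₃
  have hn₁pos : (0:ℝ) < (n₁:ℝ) := by
    by_contra h
    push_neg at h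
    have h2 : m * (-(n₁:ℝ)) ≥ 0 := mul_nonneg hm0.le (neg_nonneg.mpr h)
    have ht2 : (0:ℝ) < t^2 := by positivity
    nlinarith
  -- derive α rational
  have h1 : 2 * α * t^2 = m * ((n₁:ℝ) + n₂ - n₃) := by linear_combination hn₁ + hn₂ - hn₃
  have h2 : m * (α * (2*(n₁:ℝ))) = m * ((n₁:ℝ) + n₂ - n₃) := by
    linear_combination h1 - 2*α*hn₁
  have h3 : α * (2*(n₁:ℝ)) = (n₁:ℝ) + n₂ - n₃ := mul_left_cancel₀ (ne_of_gt hm0) h2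
  have hα : α = (((n₁ + n₂ - n₃ : ℤ)):ℝ) / ((2 * n₁ : ℤ):ℝ) := by
    push_cast
    rw [eq_div_iff (by linarith : 2*(n₁:ℝ) ≠ 0)]
    linarith [h3]
  exact hirr ⟨((n₁ + n₂ - n₃ : ℤ):ℚ) / ((2 * n₁ : ℤ):ℚ), by push_cast; push_cast at hα; linarith [hα]⟩
/-- `D₂(ψ₁) = ℝ`: for every real `α` and all sufficiently large `t` there are integers
`p`, `q` with `1 ≤ q < t·√(2/√3)` satisfying `(αq − p)²t² + q²/t² < 2/√3`. -/
theorem euclidean_Dirichlet_critical (α : ℝ) :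
    ∃ T : ℝ, ∀ t : ℝ, T ≤ t →
      ∃ q p : ℤ, 1 ≤ q ∧ (q : ℝ) < t * Real.sqrt (2 / Real.sqrt 3) ∧
        (α * q - p) ^ 2 * t ^ 2 + (q : ℝ) ^ 2 / t ^ 2 < 2 / Real.sqrt 3 := by

  have hs3 : Real.sqrt 3 ^ 2 = 3 := Real.sq_sqrt (by norm_num)
  have hs3pos : 0 < Real.sqrt 3 := Real.sqrt_pos.mpr (by norm_num)
  have hs3le2 : Real.sqrt 3 ≤ 2 := by nlinarith
  have hs31 : 1 ≤ Real.sqrt 3 := by nlinarith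
  have hone : (1:ℝ) ≤ 2 / Real.sqrt 3 := by
    rw [le_div_iff₀ hs3pos]; linarith
  have hle2 : 2 / Real.sqrt 3 ≤ 2 := by
    rw [div_le_iff₀ hs3pos]; nlinarith
  have hsq1 : (1:ℝ) ≤ Real.sqrt (2 / Real.sqrt 3) := by
    rw [show (1:ℝ) = Real.sqrt 1 from Real.sqrt_one.symm]
    exact Real.sqrt_le_sqrt hone
  have hsqsq : Real.sqrt (2 / Real.sqrt 3) ^ 2 = 2 / Real.sqrt 3 :=
    Real.sq_sqrt (by positivity)
  by_cases hirr : Irrational α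
  · refine ⟨2, fun t ht => ?_⟩
    have ht0 : (0:ℝ) < t := by linarith
    obtain ⟨q₀, p₀, hne0, hlt, hmin⟩ := key_irrational α t hirr ht
    have hq₀ne : q₀ ≠ 0 := by
      rintro rfl
      have hp : p₀ ≠ 0 := by rintro rfl; exact hne0 rfl
      have hp2 : (1:ℝ) ≤ (p₀:ℝ)^2 := by
        have h1 : (1:ℤ) ≤ p₀^2 := by
          rcases lt_or_gt_of_ne hp with h | h <;> nlinarith
        exact_mod_cast h1
      have hFval : Fv α t 0 p₀ = (p₀:ℝ)^2 * t^2 := by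
        simp only [Fv]; push_cast; ring
      rw [hFval] at hlt
      nlinarith
    obtain ⟨q, p, hq1, hFeq⟩ : ∃ q p : ℤ, 1 ≤ q ∧ Fv α t q p = Fv α t q₀ p₀ := by
      rcases lt_or_gt_of_ne hq₀ne with h | h
      · exact ⟨-q₀, -p₀, by omega, neg_id α t q₀ p₀⟩
      · exact ⟨q₀, p₀, by omega, rfl⟩
    have hlt' : Fv α t q p < 2 / Real.sqrt 3 := by rw [hFeq]; exact hlt
    have hq2 : (q:ℝ)^2 / t^2 < 2 / Real.sqrt 3 := by
      have h1 : (0:ℝ) ≤ (α * q - p)^2 * t^2 := by positivity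
      simp only [Fv] at hlt'; linarith
    have hqpos : (0:ℝ) < (q:ℝ) := by exact_mod_cast hq1
    have hbound : (q:ℝ) < t * Real.sqrt (2 / Real.sqrt 3) := by
      have hB : (0:ℝ) < t * Real.sqrt (2 / Real.sqrt 3) := by
        apply mul_pos ht0; linarith
      have hq2' : (q:ℝ)^2 < (2 / Real.sqrt 3) * t^2 := by
        rw [div_lt_iff₀ (by positivity : (0:ℝ) < t^2)] at hq2; linarith [hq2]
      have hB2 : (t * Real.sqrt (2 / Real.sqrt 3))^2 = (2 / Real.sqrt 3) * t^2 := by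
        rw [mul_pow, hsqsq]; ring
      nlinarith
    exact ⟨q, p, hq1, hbound, by simpa only [Fv] using hlt'⟩
  · rw [Irrational] at hirr
    obtain ⟨r, hr⟩ := not_not.mp hirr
    refine ⟨2*(r.den:ℝ) + 2, fun t ht => ?_⟩
    have hden1 : (1:ℝ) ≤ (r.den:ℝ) := by exact_mod_cast r.pos
    have ht0 : (0:ℝ) < t := by linarith
    have hdenne : ((r.den:ℝ)) ≠ 0 := by linarith
    have hkey : α * (r.den:ℝ) - (r.num:ℝ) = 0 := by
      have h2 : (α:ℝ) = (r.num:ℝ)/(r.den:ℝ) := by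
        rw [← hr]; exact_mod_cast (Rat.num_div_den r).symm
      rw [h2]; field_simp; ring
    refine ⟨(r.den:ℤ), r.num, by exact_mod_cast r.pos, ?_, ?_⟩
    · push_cast
      have : t * 1 ≤ t * Real.sqrt (2 / Real.sqrt 3) :=
        mul_le_mul_of_nonneg_left hsq1 ht0.le
      nlinarith
    · push_cast
      rw [show α * (r.den:ℝ) - (r.num:ℝ) = 0 from hkey]
      have h1 : (r.den:ℝ)^2 / t^2 ≤ 1/4 := by
        rw [div_le_iff₀ (by positivity : (0:ℝ) < t^2)]
        nlinarith
      nlinarith
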